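/- arXiv:1112.6317 — 3 statements merged into one kernel-verified Lean document; each statement's English description precedes it below -/
import Mathlib

section
/- Let C be a nonsingular plane cubic F = 0 over an algebraically closed field of characteristic 0 whose Hessian He(C) is also nonsingular. Then the involution ι on He(C), sending a to the unique singular point of the degenerate conic P_a(C), has no fixed points. -/
open MvPolynomial

section Aux

variable {K : Type*} [Field K]

lemma euler_key (a : Fin 3 → K) (d : Fin 3 →₀ ℕ) (c : K) (j : Fin 3) :
    eval a (pderiv j (monomial d c)) * a j = (d j : K) * eval a (monomial d c) := by
  rcases Nat.eq_zero_or_pos (d j) with hj | hj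
  · simp [pderiv_monomial, hj]
  · rw [pderiv_monomial, eval_monomial, eval_monomial]
    rw [Finsupp.prod_fintype _ _ (fun i => pow_zero (a i)),
        Finsupp.prod_fintype _ _ (fun i => pow_zero (a i))]
    have hprod : a j * ∏ k, a k ^ ((d - Finsupp.single j 1 : Fin 3 →₀ ℕ) k) = ∏ k, a k ^ d k := by
      rw [← Finset.mul_prod_erase Finset.univ _ (Finset.mem_univ j),
          ← Finset.mul_prod_erase Finset.univ (fun k => a k ^ d k) (Finset.mem_univ j),
          ← mul_assoc]
      congr 1
      · have h1 : (d - Finsupp.single j 1 : Fin 3 →₀ ℕ) j = d j - 1 := by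
          simp [Finsupp.tsub_apply]
        rw [h1, ← pow_succ' (a j) (d j - 1), Nat.sub_add_cancel hj]
      · refine Finset.prod_congr rfl fun k hk => ?_
        have hkj : k ≠ j := (Finset.mem_erase.mp hk).1
        congr 1
        rw [Finsupp.tsub_apply, Finsupp.single_apply, if_neg (Ne.symm hkj), Nat.sub_zero]
    rw [← hprod]
    ring

lemma degree_eq_sum_univ (d : Fin 3 →₀ ℕ) : d.degree = ∑ j : Fin 3, d j := by
  rw [Finsupp.degree]
  exact Finset.sum_subset (Finset.subset_univ _)
    (fun x _ hx => Finsupp.notMem_support_iff.mp hx)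

lemma euler_eval {n : ℕ} (P : MvPolynomial (Fin 3) K) (hP : P.IsHomogeneous n)
    (a : Fin 3 → K) : ∑ j, eval a (pderiv j P) * a j = (n : K) * eval a P := by
  conv_lhs => rw [P.as_sum]
  conv_rhs => rw [P.as_sum]
  simp only [map_sum, Finset.sum_mul, Finset.mul_sum]
  rw [Finset.sum_comm]
  refine Finset.sum_congr rfl fun d hd => ?_
  have hc : coeff d P ≠ 0 := MvPolynomial.mem_support_iff.mp hd
  have hdeg : d.degree = n := by
    have := hP hc
    rw [Finsupp.degree_eq_weight_one]; exact this
  calc ∑ j, eval a (pderiv j (monomial d (coeff d P))) * a j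
      = ∑ j, (d j : K) * eval a (monomial d (coeff d P)) := by
        refine Finset.sum_congr rfl fun j _ => euler_key a d (coeff d P) j
    _ = (∑ j, (d j : K)) * eval a (monomial d (coeff d P)) := by
        rw [Finset.sum_mul]
    _ = (n : K) * eval a (monomial d (coeff d P)) := by
        congr 1
        rw [← Nat.cast_sum, ← degree_eq_sum_univ, hdeg]

lemma isHomogeneous_pderiv {n : ℕ} (P : MvPolynomial (Fin 3) K)
    (hP : P.IsHomogeneous (n + 1)) (i : Fin 3) :
    (pderiv i P).IsHomogeneous n := by
  conv in pderiv i P => rw [P.as_sum]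
  rw [map_sum]
  refine MvPolynomial.IsHomogeneous.sum _ _ _ fun d hd => ?_
  rw [pderiv_monomial]
  rcases Nat.eq_zero_or_pos (d i) with hi | hi
  · rw [hi]
    simp only [Nat.cast_zero, mul_zero, map_zero]
    exact MvPolynomial.isHomogeneous_zero _ _ _
  · refine MvPolynomial.isHomogeneous_monomial _ ?_
    have hc : coeff d P ≠ 0 := MvPolynomial.mem_support_iff.mp hd
    have hdeg : d.degree = n + 1 := by
      have := hP hc
      rw [Finsupp.degree_eq_weight_one]; exact this
    rw [degree_eq_sum_univ] at hdeg ⊢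
    have hsub : ∀ j : Fin 3, (d - Finsupp.single i 1 : Fin 3 →₀ ℕ) j =
        d j - (Finsupp.single i 1) j := fun j => Finsupp.tsub_apply _ _ _
    calc ∑ j : Fin 3, (d - Finsupp.single i 1 : Fin 3 →₀ ℕ) j
        = (∑ j : Fin 3, d j) - (∑ j : Fin 3, (Finsupp.single i 1 : Fin 3 →₀ ℕ) j) := by
          rw [← Finset.sum_tsub_distrib]
          · exact Finset.sum_congr rfl fun j _ => hsub j
          · intro j _
            rcases eq_or_ne j i with rfl | hj
            · simpa using Nat.succ_le_of_lt hi
            · simp [Finsupp.single_apply, Ne.symm hj]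
      _ = n := by
          have : ∑ j : Fin 3, (Finsupp.single i 1 : Fin 3 →₀ ℕ) j = 1 := by
            rw [← degree_eq_sum_univ]
            exact Finsupp.degree_single i 1
          rw [hdeg, this]
          omega

lemma pderiv_comm' (i j : Fin 3) (P : MvPolynomial (Fin 3) K) :
    pderiv i (pderiv j P) = pderiv j (pderiv i P) := by
  conv_lhs => rw [P.as_sum]
  conv_rhs => rw [P.as_sum]
  rw [map_sum, map_sum, map_sum, map_sum]
  refine Finset.sum_congr rfl fun d _ => ?_
  rcases eq_or_ne i j with rfl | hij
  · rfl
  · simp only [pderiv_monomial]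
    have h1 : d - Finsupp.single j 1 - Finsupp.single i 1 =
        d - Finsupp.single i 1 - Finsupp.single j 1 := by
      rw [tsub_tsub, tsub_tsub, add_comm]
    have h2 : (d - Finsupp.single j 1 : Fin 3 →₀ ℕ) i = d i := by
      rw [Finsupp.tsub_apply, Finsupp.single_apply, if_neg (Ne.symm hij), Nat.sub_zero]
    have h3 : (d - Finsupp.single i 1 : Fin 3 →₀ ℕ) j = d j := by
      rw [Finsupp.tsub_apply, Finsupp.single_apply, if_neg hij, Nat.sub_zero]
    rw [h1, h2, h3]
    ring_nf

end Aux

/-- Let `C : F = 0` be a nonsingular plane cubic over an algebraically closed field of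
characteristic 0 whose Hessian curve `He(C) : det F''(x) = 0` is also nonsingular.
Then the involution `ι` on `He(C)`, sending `a` to the unique singular point of the
degenerate polar conic `P_a(C)`, has no fixed points: there is no nonzero `a` on
`He(C)` with `F''(a)·a = 0`. -/
theorem hessian_involution_fixed_point_free {K : Type*} [Field K] [IsAlgClosed K] [CharZero K]
    (F : MvPolynomial (Fin 3) K) (hF : F.IsHomogeneous 3)
    (hC : ∀ a : Fin 3 → K, a ≠ 0 → eval a F = 0 →
      ∃ i : Fin 3, eval a (pderiv i F) ≠ 0)
    (hHe : ∀ a : Fin 3 → K, a ≠ 0 →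
      eval a (Matrix.det (Matrix.of fun i j : Fin 3 =>
        (pderiv i (pderiv j F) : MvPolynomial (Fin 3) K))) = 0 →
      ∃ i : Fin 3, eval a (pderiv i (Matrix.det (Matrix.of fun i j : Fin 3 =>
        (pderiv i (pderiv j F) : MvPolynomial (Fin 3) K)))) ≠ 0) :
    ¬ ∃ a : Fin 3 → K, a ≠ 0 ∧
        Matrix.det (Matrix.of fun i j : Fin 3 => eval a (pderiv i (pderiv j F))) = 0 ∧
        (Matrix.of fun i j : Fin 3 => eval a (pderiv i (pderiv j F))).mulVec a = 0 := by
  rintro ⟨a, ha, _, hmul⟩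
  -- From H(a)·a = 0 and Euler on each ∂ᵢF (homogeneous of degree 2): ∂ᵢF(a) = 0.
  have hgrad : ∀ i : Fin 3, eval a (pderiv i F) = 0 := by
    intro i
    have hrow := congrFun hmul i
    have : ∑ j, eval a (pderiv i (pderiv j F)) * a j = 0 := by
      simpa [Matrix.mulVec, dotProduct] using hrow
    have hcomm : ∑ j, eval a (pderiv j (pderiv i F)) * a j = 0 := by
      rw [← this]
      exact Finset.sum_congr rfl fun j _ => by rw [pderiv_comm']
    have h2 : (pderiv i F).IsHomogeneous 2 := isHomogeneous_pderiv F hF i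
    have := euler_eval (pderiv i F) h2 a
    rw [hcomm] at this
    have h2ne : (2 : K) ≠ 0 := two_ne_zero
    field_simp at this
    exact (mul_eq_zero.mp this.symm).resolve_left (by norm_num)
  -- Euler on F: 3·F(a) = ∑ aᵢ·∂ᵢF(a) = 0, so F(a) = 0.
  have hFa : eval a F = 0 := by
    have := euler_eval F hF a
    simp only [hgrad, zero_mul, Finset.sum_const_zero] at this
    have h3 : (3 : K) ≠ 0 := three_ne_zero
    field_simp at this
    exact (mul_eq_zero.mp this.symm).resolve_left (by norm_num)
  obtain ⟨i, hi⟩ := hC a ha hFa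
  exact hi (hgrad i)
end

section
/- Let E₀: y² = x³ + Ax + B be an elliptic curve over a field k of characteristic 0 with A ≠ 0 and δ = 4A³ + 27B² ≠ 0. Then the map ψ₁ sending (X, Y) to (x, y) = (−(X³+4B)/(3X²+4A), (X³+4AX−8B)·Y/(3X²+4A)²) maps the curve C: Y² = −(3X²+4A)(X³+AX+B) into E₀; i.e., the images satisfy y² = x³ + Ax + B identically modulo the equation of C. -/
/-- Let `E₀ : y² = x³ + Ax + B` with `A ≠ 0` and `δ = 4A³ + 27B² ≠ 0`.  The map
`ψ₁ : (X, Y) ↦ (−(X³+4B)/(3X²+4A), (X³+4AX−8B)·Y/(3X²+4A)²)` maps the genus-2 curve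
`C : Y² = −(3X²+4A)(X³+AX+B)` into `E₀`: the images satisfy `y² = x³ + Ax + B`. -/
theorem psi1_maps_into_E0 {K : Type*} [Field K] [CharZero K]
    (A B X Y : K) (hA : A ≠ 0) (hδ : 4 * A ^ 3 + 27 * B ^ 2 ≠ 0)
    (hC : Y ^ 2 = -(3 * X ^ 2 + 4 * A) * (X ^ 3 + A * X + B))
    (hden : 3 * X ^ 2 + 4 * A ≠ 0) :
    ((X ^ 3 + 4 * A * X - 8 * B) * Y / (3 * X ^ 2 + 4 * A) ^ 2) ^ 2
      = (-(X ^ 3 + 4 * B) / (3 * X ^ 2 + 4 * A)) ^ 3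
        + A * (-(X ^ 3 + 4 * B) / (3 * X ^ 2 + 4 * A)) + B := by
  field_simp
  have hden' : X ^ 2 * 3 + 4 * A ≠ 0 := by rwa [mul_comm] at hden
  rw [hC]
  field_simp
  ring
end

section
/- Let E₀: y² = x³ + Ax + B with A ≠ 0, δ = 4A³+27B² ≠ 0, j(E₀) its j-invariant, and let F₀ be the elliptic curve δy² = x³ − δx − 2Bδ. Then j(F₀)/1728 = 1728/j(E₀), provided j(E₀) ≠ 0. -/
/-- Let `E₀ : y² = x³ + Ax + B` with `A ≠ 0` and `δ = 4A³ + 27B² ≠ 0`, with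
`j(E₀) = 1728·4A³/δ`.  The curve `F₀ : δy² = x³ − δx − 2Bδ` is isomorphic via scaling
to the Weierstrass curve `y² = x³ − (1/δ)x − (2B/δ²)`, whose `j`-invariant (computed
by the formula `j = 1728·4a³/(4a³+27b²)` for `y² = x³ + ax + b`) is `j(F₀)`.
Then `j(F₀)/1728 = 1728/j(E₀)`, provided `j(E₀) ≠ 0`. -/
theorem j_invariant_relation {K : Type*} [Field K] [CharZero K]
    (A B : K) (hA : A ≠ 0) (hδ : 4 * A ^ 3 + 27 * B ^ 2 ≠ 0)
    (hjE : 1728 * (4 * A ^ 3) / (4 * A ^ 3 + 27 * B ^ 2) ≠ 0) :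
    (1728 * (4 * (-(1 / (4 * A ^ 3 + 27 * B ^ 2))) ^ 3)
        / (4 * (-(1 / (4 * A ^ 3 + 27 * B ^ 2))) ^ 3
            + 27 * (-(2 * B / (4 * A ^ 3 + 27 * B ^ 2) ^ 2)) ^ 2)) / 1728
      = 1728 / (1728 * (4 * A ^ 3) / (4 * A ^ 3 + 27 * B ^ 2)) := by
  have hA3 : A ^ 3 ≠ 0 := pow_ne_zero _ hA
  have hden : 4 * (-(1 / (4 * A ^ 3 + 27 * B ^ 2))) ^ 3
      + 27 * (-(2 * B / (4 * A ^ 3 + 27 * B ^ 2) ^ 2)) ^ 2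
      = -(16 * A ^ 3) / (4 * A ^ 3 + 27 * B ^ 2) ^ 4 := by
    field_simp
    ring
  rw [hden]
  field_simp
  ring
end
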